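/- With notation as in the previous statement, let U ⊂ V[k] be a graded subspace of the graded module V = ⊕_ℓ V[ℓ]. Then [E_i, 1_U E_j]^1 = δ_{i+j,0} tr(E_0 1_U) 1_{V[k+j]} − dim(U) E_{i+j} 1_{V[k+j]}, where [x⊗X, y⊗Y]^1 := [x,y] ⊗ XY and tr is taken in the second factor. -/

import Mathlib

set_option linter.unusedSectionVars false

section Aux
variable {K : Type*} [Field K] [CharZero K] [DecidableEq K]
    {V : Type*} [AddCommGroup V] [Module K V]
    {J : Type*} [Fintype J] [DecidableEq J]

lemma P_eig (v : Module.Basis J K V) (wt : J → K) (H : Module.End K V)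
    (hH : ∀ x, H (v x) = wt x • v x) (P : K → Module.End K V)
    (hP : ∀ (c : K) (x : J), P c (v x) = if wt x = c then v x else 0)
    (w c : K) (x : V) (hx : H x = w • x) :
    P c x = if w = c then x else 0 := by
  have key : ∀ q, wt q ≠ w → v.repr x q = 0 := by
    intro q hq
    have h2 : v.repr (H x) q = wt q * v.repr x q := by
      conv_lhs => rw [← v.sum_repr x]
      simp only [map_sum, map_smul, hH, smul_smul, Finsupp.coe_finset_sum, Finset.sum_apply,
        Finsupp.smul_apply, Module.Basis.repr_self]
      simp [hH, smul_smul, Finsupp.single_apply, mul_comm]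
    have h1 : v.repr (H x) q = w * v.repr x q := by rw [hx]; simp
    have h3 : (wt q - w) * v.repr x q = 0 := by
      have := h2.symm.trans h1; ring_nf; linear_combination this
    exact (mul_eq_zero.mp h3).resolve_left (sub_ne_zero.mpr hq)
  have hx2 : P c x = ∑ q, v.repr x q • (if wt q = c then v q else 0) := by
    conv_lhs => rw [← v.sum_repr x]
    simp only [map_sum, map_smul, hP]
  split_ifs with hwc
  · subst hwc
    rw [hx2]
    conv_rhs => rw [← v.sum_repr x]
    apply Finset.sum_congr rfl
    intro q _
    by_cases h : wt q = w
    · simp [h]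
    · simp [h, key q h]
  · rw [hx2]
    apply Finset.sum_eq_zero
    intro q _
    by_cases h : wt q = c
    · have := key q (by rw [h]; exact fun hh => hwc hh.symm)
      simp [this]
    · simp [h]

lemma P_comm (v : Module.Basis J K V) (wt : J → K) (H : Module.End K V)
    (hH : ∀ x, H (v x) = wt x • v x) (P : K → Module.End K V)
    (hP : ∀ (c : K) (x : J), P c (v x) = if wt x = c then v x else 0)
    (X : Module.End K V) (m : K) (hX : ⁅H, X⁆ = m • X) (c : K) :
    X * P c = P (c + m) * X := by
  apply v.ext; intro q
  have hXv : H (X (v q)) = (wt q + m) • X (v q) := by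
    have h := congrArg (fun f : Module.End K V => f (v q)) hX
    simp only [Ring.lie_def, LinearMap.sub_apply, Module.End.mul_apply,
      LinearMap.smul_apply] at h
    rw [hH, map_smul, sub_eq_iff_eq_add] at h
    rw [h, add_smul, add_comm]
  rw [Module.End.mul_apply, Module.End.mul_apply, hP,
    P_eig v wt H hH P hP (wt q + m) (c + m) (X (v q)) hXv]
  by_cases h : wt q = c
  · simp [h]
  · simp [h, add_left_inj]

lemma repr_P (v : Module.Basis J K V) (wt : J → K) (P : K → Module.End K V)
    (hP : ∀ (c : K) (x : J), P c (v x) = if wt x = c then v x else 0)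
    (s : K) (w : V) (p : J) :
    v.repr (P s w) p = if wt p = s then v.repr w p else 0 := by
  have h1 : P s w = ∑ q, (if wt q = s then v.repr w q • v q else 0) := by
    conv_lhs => rw [← v.sum_repr w]
    rw [map_sum]
    refine Finset.sum_congr rfl fun q _ => ?_
    rw [map_smul, hP]
    split_ifs <;> simp
  rw [h1, map_sum, Finset.sum_apply']
  rw [Finset.sum_congr rfl (fun q _ => ?_),
    Finset.sum_ite_eq' Finset.univ p (fun q => if wt q = s then v.repr w q else 0)]
  · simp
  · by_cases h2 : q = p
    · subst h2
      by_cases h : wt q = s <;> simp [h, Finsupp.single_apply]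
    · by_cases h : wt q = s <;> simp [h, h2, Finsupp.single_apply]


lemma tr_formula (v : Module.Basis J K V) (f : Module.End K V) :
    LinearMap.trace K V f = ∑ p, v.repr (f (v p)) p := by
  haveI := Module.Finite.of_basis v
  rw [LinearMap.trace_eq_matrix_trace K v]
  simp [Matrix.trace, Matrix.diag, LinearMap.toMatrix_apply]

lemma tr_deg_zero (H X : Module.End K V) (m : K) (hm : m ≠ 0)
    (hX : ⁅H, X⁆ = m • X) :
    LinearMap.trace K V X = 0 := by
  have h0 : LinearMap.trace K V ⁅H, X⁆ = 0 := by
    rw [Ring.lie_def, map_sub, LinearMap.trace_mul_comm, sub_self]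
  rw [hX, map_smul] at h0
  simpa [hm] using h0

lemma deg_mul (H X Y : Module.End K V) (m n : K)
    (hX : ⁅H, X⁆ = m • X) (hY : ⁅H, Y⁆ = n • Y) :
    ⁅H, X * Y⁆ = (m + n) • (X * Y) := by
  rw [Ring.lie_def] at *
  have : H * (X * Y) - X * Y * H = (H * X - X * H) * Y + X * (H * Y - Y * H) := by
    noncomm_ring
  rw [this, hX, hY, smul_mul_assoc, mul_smul_comm, add_smul]

lemma endApp (v : Module.Basis J K V) (p q : J) (w : V) :
    v.end (q, p) w = v.repr w p • v q := by
  conv_lhs => rw [← v.sum_repr w]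
  rw [map_sum]
  simp only [map_smul, Module.Basis.end_apply_apply]
  rw [Finset.sum_congr rfl (fun s _ => ?_),
    Finset.sum_ite_eq Finset.univ p (fun s => v.repr w s • v q)]
  · simp
  · split_ifs <;> simp

lemma trXE (v : Module.Basis J K V) (X : Module.End K V) (p q : J) :
    LinearMap.trace K V (X * v.end (q, p)) = v.repr (X (v q)) p := by
  rw [tr_formula v]
  rw [Finset.sum_congr rfl (fun r _ => ?_),
    Finset.sum_ite_eq Finset.univ p (fun _ => v.repr (X (v q)) p)]
  · simp
  · rw [Module.End.mul_apply, Module.Basis.end_apply_apply]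
    split_ifs with h
    · subst h; rfl
    · simp

lemma expandM (v : Module.Basis J K V) (W : Module.End K V) :
    ∑ p, ∑ q, (LinearMap.trace K V (W * v.end (q, p))) • v.end (p, q) = W := by
  apply v.ext; intro r
  simp only [LinearMap.sum_apply, LinearMap.smul_apply, Module.Basis.end_apply_apply, trXE v]
  rw [Finset.sum_congr rfl (fun p _ => ?_)]
  · exact v.sum_repr (W (v r))
  · rw [Finset.sum_congr rfl (fun q _ => ?_),
      Finset.sum_ite_eq' Finset.univ r (fun q => v.repr (W (v q)) p • v p)]
    · simp
    · split_ifs <;> simp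

lemma endDeg (v : Module.Basis J K V) (wt : J → K) (H : Module.End K V)
    (hH : ∀ x, H (v x) = wt x • v x) (p q : J) :
    ⁅H, v.end (p, q)⁆ = (wt p - wt q) • v.end (p, q) := by
  apply v.ext; intro r
  simp only [Ring.lie_def, LinearMap.sub_apply, Module.End.mul_apply,
    LinearMap.smul_apply, Module.Basis.end_apply_apply, hH, map_smul]
  by_cases h : q = r
  · subst h; simp [hH, sub_smul]
  · simp [h]

lemma endXend (v : Module.Basis J K V) (X : Module.End K V) (p q : J) :
    v.end (q, p) * X * v.end (p, q) = (v.repr (X (v p)) p) • v.end (q, q) := by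
  apply v.ext; intro r
  simp only [Module.End.mul_apply, LinearMap.smul_apply, Module.Basis.end_apply_apply]
  by_cases h : q = r
  · subst h; simp [endApp]
  · simp [h]

lemma P_as_sum (v : Module.Basis J K V) (wt : J → K) (P : K → Module.End K V)
    (hP : ∀ (c : K) (x : J), P c (v x) = if wt x = c then v x else 0) (c : K) :
    P c = ∑ q, if wt q = c then v.end (q, q) else 0 := by
  apply v.ext; intro r
  simp only [LinearMap.sum_apply, hP]
  rw [Finset.sum_congr rfl (fun q _ => ?_),
    Finset.sum_ite_eq' Finset.univ r (fun q => if wt q = c then v q else 0)]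
  · simp
  · by_cases h : q = r
    · subst h; split_ifs <;> simp_all [Module.Basis.end_apply_apply]
    · split_ifs <;> simp_all [Module.Basis.end_apply_apply]

lemma expandB {I : Type*} [Fintype I] [DecidableEq I]
    (e : Module.Basis I K (Module.End K V)) (f : I → Module.End K V)
    (hd : ∀ a c, LinearMap.trace K V (e a * f c) = if a = c then 1 else 0)
    (W : Module.End K V) :
    ∑ a, LinearMap.trace K V (W * f a) • e a = W := by
  have hco : ∀ a, LinearMap.trace K V (W * f a) = e.repr W a := by
    intro a
    conv_lhs => rw [← e.sum_repr W]
    rw [Finset.sum_mul]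
    simp only [smul_mul_assoc, map_sum, map_smul, hd, smul_eq_mul, mul_ite, mul_one, mul_zero]
    simp
  simp_rw [hco]
  exact e.sum_repr W

lemma expand2 (v : Module.Basis J K V) {I : Type*} [Fintype I] [DecidableEq I]
    (bE : Module.Basis I K (Module.End K V)) (du : I → Module.End K V)
    (hdual : ∀ a c, LinearMap.trace K V (bE a * du c) = if a = c then 1 else 0)
    (W : Module.End K V) :
    ∑ a, LinearMap.trace K V (W * bE a) • du a = W := by
  set Y := W - ∑ a, LinearMap.trace K V (W * bE a) • du a with hY
  have hdual' : ∀ a c, LinearMap.trace K V (du a * bE c) = if c = a then 1 else 0 :=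
    fun a c => by rw [LinearMap.trace_mul_comm]; exact hdual c a
  have hperp : ∀ b, LinearMap.trace K V (Y * bE b) = 0 := by
    intro b
    rw [hY, sub_mul, map_sub, Finset.sum_mul, map_sum]
    simp only [smul_mul_assoc, map_smul, smul_eq_mul, hdual', mul_ite, mul_one, mul_zero]
    simp [Finset.sum_ite_eq]
  have hZ : ∀ Z, LinearMap.trace K V (Y * Z) = 0 := by
    intro Z
    conv_lhs => rw [← bE.sum_repr Z]
    rw [Finset.mul_sum, map_sum]
    simp only [mul_smul_comm, map_smul, hperp, smul_zero, Finset.sum_const_zero]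
  have hY0 : Y = 0 := by
    apply v.ext; intro q
    have hrep : ∀ p, v.repr (Y (v q)) p = 0 := by
      intro p
      rw [← trXE v Y p q]
      exact hZ _
    rw [LinearMap.zero_apply, ← v.repr.map_eq_zero_iff]
    exact Finsupp.ext hrep
  rw [hY] at hY0
  exact (sub_eq_zero.mp hY0).symm

lemma RCmain (v : Module.Basis J K V) (wt : J → K) (H : Module.End K V)
    (hH : ∀ x, H (v x) = wt x • v x) (P : K → Module.End K V)
    (hP : ∀ (c : K) (x : J), P c (v x) = if wt x = c then v x else 0)
    {A : Type*} [Fintype A] (e f : A → Module.End K V) (m : A → K)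
    (hde : ∀ a, ⁅H, e a⁆ = m a • e a) (hdf : ∀ a, ⁅H, f a⁆ = (-(m a)) • f a)
    (hexp : ∀ W, ∑ a, LinearMap.trace K V (W * f a) • e a = W)
    (μ s t : K) (X : Module.End K V) (hs : P s * X = X) (ht : X * P t = X) :
    ∑ a ∈ Finset.univ.filter (fun a => m a = μ), e a * X * f a
      = if s = t then (LinearMap.trace K V X) • P (t + μ) else 0 := by
  classical
  -- c p facts
  set c : J → K := fun p => v.repr (X (v p)) p with hc
  have hct : ∀ p, wt p ≠ t → c p = 0 := by
    intro p hp
    have hx : X (v p) = 0 := by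
      conv_lhs => rw [← ht]
      rw [Module.End.mul_apply, hP, if_neg hp, map_zero]
    rw [hc]; simp [hx]
  have hcs : ∀ p, wt p ≠ s → c p = 0 := by
    intro p hp
    have : c p = v.repr ((P s) (X (v p))) p := by
      conv_lhs => rw [hc]
      conv_lhs => rw [show X = P s * X from hs.symm]
      rfl
    rw [this, repr_P v wt P hP, if_neg hp]
  -- step 1
  have step1 : ∀ a, e a * X * f a
      = ∑ p, ∑ q, LinearMap.trace K V (f a * v.end (q, p)) • (e a * (X * v.end (p, q))) := by
    intro a
    rw [mul_assoc]
    conv_lhs => rw [← expandM v (f a)]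
    simp only [Finset.mul_sum, mul_smul_comm]
  have claimA : ∀ p q, (∑ a ∈ Finset.univ.filter (fun a => m a = μ),
      LinearMap.trace K V (f a * v.end (q, p)) • e a)
      = if wt q - wt p = μ then v.end (q, p) else 0 := by
    intro p q
    by_cases hμ : wt q - wt p = μ
    · rw [if_pos hμ]
      rw [Finset.sum_subset (Finset.subset_univ _) ?van]
      case van =>
        intro a _ ha
        have hma : m a ≠ μ := by simpa using ha
        have h0 : LinearMap.trace K V (f a * v.end (q, p)) = 0 := by
          refine tr_deg_zero H _ (-(m a) + (wt q - wt p)) ?_ ?_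
          · rw [hμ]; intro h0; exact hma (by linear_combination -h0)
          · exact deg_mul H _ _ _ _ (hdf a) (endDeg v wt H hH q p)
        rw [h0, zero_smul]
      have : ∀ a, LinearMap.trace K V (f a * v.end (q, p))
          = LinearMap.trace K V (v.end (q, p) * f a) := fun a => by rw [LinearMap.trace_mul_comm]
      simp_rw [this]
      exact hexp (v.end (q, p))
    · rw [if_neg hμ]
      apply Finset.sum_eq_zero; intro a ha
      have hma : m a = μ := by simpa using ha
      have h0 : LinearMap.trace K V (f a * v.end (q, p)) = 0 := by
        refine tr_deg_zero H _ (-(m a) + (wt q - wt p)) ?_ ?_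
        · rw [hma]; intro h0; exact hμ (by linear_combination h0)
        · exact deg_mul H _ _ _ _ (hdf a) (endDeg v wt H hH q p)
      rw [h0, zero_smul]
  simp_rw [step1]
  rw [Finset.sum_comm]
  rw [Finset.sum_congr rfl (fun p _ => Finset.sum_comm)]
  have step2 : ∀ p q, (∑ a ∈ Finset.univ.filter (fun a => m a = μ),
      LinearMap.trace K V (f a * v.end (q, p)) • (e a * (X * v.end (p, q))))
      = if wt q - wt p = μ then c p • v.end (q, q) else 0 := by
    intro p q
    have : ∀ a, LinearMap.trace K V (f a * v.end (q, p)) • (e a * (X * v.end (p, q)))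
        = (LinearMap.trace K V (f a * v.end (q, p)) • e a) * (X * v.end (p, q)) := by
      intro a; rw [smul_mul_assoc]
    simp_rw [this, ← Finset.sum_mul, claimA p q]
    by_cases hμ : wt q - wt p = μ
    · rw [if_pos hμ, if_pos hμ, ← mul_assoc, endXend]
    · rw [if_neg hμ, if_neg hμ, zero_mul]
  simp_rw [step2]
  by_cases hst : s = t
  · subst hst
    rw [if_pos rfl]
    rw [Finset.sum_comm]
    have inner : ∀ q, (∑ p, if wt q - wt p = μ then c p • v.end (q, q) else 0)
        = if wt q = s + μ then (LinearMap.trace K V X) • v.end (q, q) else 0 := by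
      intro q
      by_cases hq : wt q = s + μ
      · rw [if_pos hq]
        have hTX : LinearMap.trace K V X = ∑ p, c p := tr_formula v X
        have hterm : ∀ p, (if wt q - wt p = μ then c p • v.end (q, q) else 0)
            = c p • v.end (q, q) := by
          intro p
          by_cases hp : wt q - wt p = μ
          · rw [if_pos hp]
          · rw [if_neg hp]
            have hps : wt p ≠ s := fun h => hp (by rw [h, hq]; ring)
            rw [hcs p hps, zero_smul]
        simp_rw [hterm]
        rw [← Finset.sum_smul, ← hTX]
      · rw [if_neg hq]
        apply Finset.sum_eq_zero; intro p _
        by_cases hp : wt q - wt p = μ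
        · rw [if_pos hp]
          have hps : wt p ≠ s := fun h => hq (by rw [← hp, h]; ring)
          rw [hcs p hps, zero_smul]
        · rw [if_neg hp]
    simp_rw [inner]
    rw [P_as_sum v wt P hP (s + μ), Finset.smul_sum]
    refine Finset.sum_congr rfl (fun q _ => ?_)
    split_ifs <;> simp
  · rw [if_neg hst]
    have hc0 : ∀ p, c p = 0 := by
      intro p
      by_cases hp : wt p = t
      · exact hcs p (fun h => hst (by rw [← h, hp]))
      · exact hct p hp
    apply Finset.sum_eq_zero; intro p _
    apply Finset.sum_eq_zero; intro q _
    rw [hc0 p, zero_smul, ite_self]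

end Aux
open scoped TensorProduct

/-- with `g = gl(V)` graded by `ad H`-eigenvalues, `V = ⊕ V[ℓ]` the graded
module with projections `P ℓ`, basis `{bE i}` of `End V` with trace-dual `{du i}` and
degrees `d i`, `E_j = ∑_{i : d i = j} bE i ⊗ du i`, and `Q = 1_U` the projection onto a
subspace `U ⊆ V[k]` along a graded complement, one has
`[E_i, 1_U E_j]¹ = δ_{i+j,0} tr(E₀ 1_U) 1_{V[k+j]} − dim(U) E_{i+j} 1_{V[k+j]}`. -/
theorem stmt9 {K : Type*} [Field K] [CharZero K] [DecidableEq K]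
    {V : Type*} [AddCommGroup V] [Module K V]
    {J : Type*} [Fintype J] [DecidableEq J] (v : Module.Basis J K V) (wt : J → K)
    (H : Module.End K V) (hH : ∀ x, H (v x) = wt x • v x)
    (P : K → Module.End K V)
    (hP : ∀ (c : K) (x : J), P c (v x) = if wt x = c then v x else 0)
    {I : Type*} [Fintype I] [DecidableEq I]
    (bE : Module.Basis I K (Module.End K V)) (du : I → Module.End K V)
    (hdual : ∀ a c, LinearMap.trace K V (bE a * du c) = if a = c then 1 else 0)
    (d : I → K)
    (hbdeg : ∀ a, ⁅H, bE a⁆ = d a • bE a)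
    (hdudeg : ∀ a, ⁅H, du a⁆ = (-(d a)) • du a)
    (k : K) (Q : Module.End K V)
    (hQidem : Q * Q = Q) (hQ1 : P k * Q = Q) (hQ2 : Q * P k = Q)
    (i j : K) :
    ∑ a ∈ Finset.univ.filter (fun a => d a = i), ∑ c ∈ Finset.univ.filter (fun c => d c = j),
        ⁅bE a, bE c⁆ ⊗ₜ[K] (du a * Q * du c)
      = (if i + j = 0 then (1 : K) else 0) •
          ((∑ c ∈ Finset.univ.filter (fun c => d c = 0),
              (LinearMap.trace K V (du c * Q)) • bE c) ⊗ₜ[K] P (k + j))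
        - (Module.finrank K ↥(LinearMap.range Q) : K) •
          ∑ c ∈ Finset.univ.filter (fun c => d c = i + j), bE c ⊗ₜ[K] (du c * P (k + j)) := by
  classical
  haveI := Module.Finite.of_basis v
  set fI := Finset.univ.filter (fun a => d a = i) with hfI
  set fJ := Finset.univ.filter (fun c => d c = j) with hfJ
  -- trace of Q
  have traceQ : LinearMap.trace K V Q = (Module.finrank K ↥(LinearMap.range Q) : K) := by
    have hproj : LinearMap.IsProj (LinearMap.range Q) Q := by
      refine ⟨fun x => LinearMap.mem_range_self Q x, ?_⟩
      rintro x ⟨y, rfl⟩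
      exact congrArg (fun f : Module.End K V => f y) hQidem
    exact hproj.trace
  -- split the commutator
  rw [show (∑ a ∈ fI, ∑ c ∈ fJ, ⁅bE a, bE c⁆ ⊗ₜ[K] (du a * Q * du c))
      = (∑ a ∈ fI, ∑ c ∈ fJ, (bE a * bE c) ⊗ₜ[K] (du a * Q * du c))
        - (∑ a ∈ fI, ∑ c ∈ fJ, (bE c * bE a) ⊗ₜ[K] (du a * Q * du c)) from by
    simp only [Ring.lie_def, TensorProduct.sub_tmul, Finset.sum_sub_distrib]]
  -- S1 computation
  have hS1 : (∑ a ∈ fI, ∑ c ∈ fJ, (bE a * bE c) ⊗ₜ[K] (du a * Q * du c))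
      = ∑ e ∈ Finset.univ.filter (fun e => d e = i + j),
          bE e ⊗ₜ[K] (if i + j = 0 then (LinearMap.trace K V (du e * Q)) • P (k + j) else 0) := by
    have e1 : ∀ a c, (bE a * bE c) ⊗ₜ[K] (du a * Q * du c)
        = ∑ e, LinearMap.trace K V (bE a * bE c * du e) • (bE e ⊗ₜ[K] (du a * Q * du c)) := by
      intro a c
      conv_lhs => rw [← expandB bE du hdual (bE a * bE c)]
      rw [TensorProduct.sum_tmul]
      exact Finset.sum_congr rfl fun e _ => by rw [TensorProduct.smul_tmul']
    simp_rw [e1]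
    rw [Finset.sum_congr rfl (fun a _ => Finset.sum_comm)]
    rw [Finset.sum_comm]
    rw [← Finset.sum_subset (Finset.filter_subset (fun e => d e = i + j) Finset.univ) ?van]
    case van =>
      intro e _ he
      have hde : d e ≠ i + j := by simpa using he
      apply Finset.sum_eq_zero; intro a ha
      apply Finset.sum_eq_zero; intro c hc
      have hai : d a = i := by rw [hfI] at ha; simpa using ha
      have hcj : d c = j := by rw [hfJ] at hc; simpa using hc
      have h0 : LinearMap.trace K V (bE a * bE c * du e) = 0 := by
        refine tr_deg_zero H _ (d a + d c + -(d e)) ?_ ?_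
        · rw [hai, hcj]; intro h0; exact hde (by linear_combination -h0)
        · exact deg_mul H _ _ _ _ (deg_mul H _ _ _ _ (hbdeg a) (hbdeg c)) (hdudeg e)
      rw [h0, zero_smul]
    refine Finset.sum_congr rfl (fun e hef => ?_)
    have he : d e = i + j := by simpa using hef
    -- push scalars into the second tensor factor
    have e2 : ∀ (a c : I), LinearMap.trace K V (bE a * bE c * du e) • (bE e ⊗ₜ[K] (du a * Q * du c))
        = bE e ⊗ₜ[K] (LinearMap.trace K V (bE a * bE c * du e) • (du a * Q * du c)) := by
      intro a c; rw [TensorProduct.tmul_smul]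
    simp_rw [e2, ← TensorProduct.tmul_sum]
    congr 1
    -- Inner : ∑ a fI, ∑ c fJ, T(...) • (du a * Q * du c)
    rw [Finset.sum_comm]
    have e3 : ∀ c, c ∈ fJ → (∑ a ∈ fI,
        LinearMap.trace K V (bE a * bE c * du e) • (du a * Q * du c))
        = bE c * (du e * Q) * du c := by
      intro c hc
      have hcj : d c = j := by rw [hfJ] at hc; simpa using hc
      have e4 : ∀ a, LinearMap.trace K V (bE a * bE c * du e) • (du a * Q * du c)
          = (LinearMap.trace K V ((bE c * du e) * bE a) • du a) * (Q * du c) := by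
        intro a
        rw [mul_assoc (bE a), LinearMap.trace_mul_comm K (bE a), mul_assoc (du a), smul_mul_assoc]
      simp_rw [e4, ← Finset.sum_mul]
      rw [Finset.sum_subset (Finset.filter_subset (fun a => d a = i) Finset.univ) ?van2]
      case van2 =>
        intro a _ ha
        have hai : d a ≠ i := by simpa using ha
        have h0 : LinearMap.trace K V ((bE c * du e) * bE a) = 0 := by
          refine tr_deg_zero H _ ((d c + -(d e)) + d a) ?_ ?_
          · rw [hcj, he]; intro h0; exact hai (by linear_combination h0)
          · exact deg_mul H _ _ _ _ (deg_mul H _ _ _ _ (hbdeg c) (hdudeg e)) (hbdeg a)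
        rw [h0, zero_smul]
      rw [expand2 v bE du hdual (bE c * du e)]
      noncomm_ring
    rw [Finset.sum_congr rfl e3]
    have := RCmain v wt H hH P hP bE du d hbdeg hdudeg (expandB bE du hdual)
      j (k - (i + j)) k (du e * Q) ?hs ?ht
    case hs =>
      conv_rhs => rw [← hQ1, ← mul_assoc]
      rw [P_comm v wt H hH P hP (du e) (-(d e)) (hdudeg e) k]
      rw [show k + -(d e) = k - (i + j) from by rw [he]; ring, mul_assoc]
    case ht => rw [mul_assoc, hQ2]
    rw [hfJ, this]
    simp only [sub_eq_self]
  -- S2 computation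
  have hS2 : (∑ a ∈ fI, ∑ c ∈ fJ, (bE c * bE a) ⊗ₜ[K] (du a * Q * du c))
      = ∑ e ∈ Finset.univ.filter (fun e => d e = i + j),
          bE e ⊗ₜ[K] ((LinearMap.trace K V Q) • (du e * P (k + j))) := by
    have e1 : ∀ a c, (bE c * bE a) ⊗ₜ[K] (du a * Q * du c)
        = ∑ e, LinearMap.trace K V (bE c * bE a * du e) • (bE e ⊗ₜ[K] (du a * Q * du c)) := by
      intro a c
      conv_lhs => rw [← expandB bE du hdual (bE c * bE a)]
      rw [TensorProduct.sum_tmul]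
      exact Finset.sum_congr rfl fun e _ => by rw [TensorProduct.smul_tmul']
    simp_rw [e1]
    rw [Finset.sum_congr rfl (fun a _ => Finset.sum_comm)]
    rw [Finset.sum_comm]
    rw [← Finset.sum_subset (Finset.filter_subset (fun e => d e = i + j) Finset.univ) ?van3]
    case van3 =>
      intro e _ he
      have hde : d e ≠ i + j := by simpa using he
      apply Finset.sum_eq_zero; intro a ha
      apply Finset.sum_eq_zero; intro c hc
      have hai : d a = i := by rw [hfI] at ha; simpa using ha
      have hcj : d c = j := by rw [hfJ] at hc; simpa using hc
      have h0 : LinearMap.trace K V (bE c * bE a * du e) = 0 := by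
        refine tr_deg_zero H _ (d c + d a + -(d e)) ?_ ?_
        · rw [hai, hcj]; intro h0; exact hde (by linear_combination -h0)
        · exact deg_mul H _ _ _ _ (deg_mul H _ _ _ _ (hbdeg c) (hbdeg a)) (hdudeg e)
      rw [h0, zero_smul]
    refine Finset.sum_congr rfl (fun e hef => ?_)
    have he : d e = i + j := by simpa using hef
    have e2 : ∀ (a c : I), LinearMap.trace K V (bE c * bE a * du e) • (bE e ⊗ₜ[K] (du a * Q * du c))
        = bE e ⊗ₜ[K] (LinearMap.trace K V (bE c * bE a * du e) • (du a * Q * du c)) := by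
      intro a c; rw [TensorProduct.tmul_smul]
    simp_rw [e2, ← TensorProduct.tmul_sum]
    congr 1
    have e3 : ∀ a, a ∈ fI → (∑ c ∈ fJ,
        LinearMap.trace K V (bE c * bE a * du e) • (du a * Q * du c))
        = (du a * Q) * (bE a * du e) := by
      intro a ha
      have hai : d a = i := by rw [hfI] at ha; simpa using ha
      have e4 : ∀ c, LinearMap.trace K V (bE c * bE a * du e) • (du a * Q * du c)
          = (du a * Q) * (LinearMap.trace K V ((bE a * du e) * bE c) • du c) := by
        intro c
        rw [mul_assoc (bE c), LinearMap.trace_mul_comm K (bE c), mul_smul_comm]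
      simp_rw [e4, ← Finset.mul_sum]
      rw [Finset.sum_subset (Finset.filter_subset (fun c => d c = j) Finset.univ) ?van4]
      case van4 =>
        intro c _ hc
        have hcj : d c ≠ j := by simpa using hc
        have h0 : LinearMap.trace K V ((bE a * du e) * bE c) = 0 := by
          refine tr_deg_zero H _ ((d a + -(d e)) + d c) ?_ ?_
          · rw [hai, he]; intro h0; exact hcj (by linear_combination h0)
          · exact deg_mul H _ _ _ _ (deg_mul H _ _ _ _ (hbdeg a) (hdudeg e)) (hbdeg c)
        rw [h0, zero_smul]
      rw [expand2 v bE du hdual (bE a * du e)]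
    rw [Finset.sum_congr rfl e3]
    have e5 : ∀ a, (du a * Q) * (bE a * du e) = (du a * Q * bE a) * du e := by
      intro a; noncomm_ring
    simp_rw [e5, ← Finset.sum_mul]
    have hfilt : fI = Finset.univ.filter (fun a => -(d a) = -i) := by
      rw [hfI]; exact Finset.filter_congr (fun a _ => by simp [neg_inj])
    rw [hfilt]
    have := RCmain v wt H hH P hP du bE (fun a => -(d a)) hdudeg
      (fun a => by rw [neg_neg]; exact hbdeg a) (expand2 v bE du hdual)
      (-i) k k Q hQ1 hQ2
    rw [this, if_pos rfl, smul_mul_assoc]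
    congr 1
    rw [P_comm v wt H hH P hP (du e) (-(d e)) (hdudeg e) (k + j)]
    have harg : k + -i = k + j + -(d e) := by rw [he]; ring
    rw [harg]
  rw [hS1, hS2]
  by_cases hij : i + j = 0
  · rw [if_pos hij, one_smul]
    congr 1
    · rw [TensorProduct.sum_tmul]
      rw [show Finset.univ.filter (fun e => d e = i + j)
          = Finset.univ.filter (fun e => d e = 0) from by rw [hij]]
      refine Finset.sum_congr rfl (fun e _ => ?_)
      rw [if_pos hij, TensorProduct.smul_tmul]
    · rw [Finset.smul_sum]
      refine Finset.sum_congr rfl (fun e _ => ?_)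
      rw [TensorProduct.tmul_smul, traceQ]
  · rw [if_neg hij, zero_smul, zero_sub]
    have h1 : (∑ e ∈ Finset.univ.filter (fun e => d e = i + j),
        bE e ⊗ₜ[K] (if i + j = 0 then (LinearMap.trace K V (du e * Q)) • P (k + j) else 0))
        = 0 := by
      apply Finset.sum_eq_zero; intro e _
      rw [if_neg hij, TensorProduct.tmul_zero]
    rw [h1, zero_sub, neg_inj, Finset.smul_sum]
    refine Finset.sum_congr rfl (fun e _ => ?_)
    rw [TensorProduct.tmul_smul, traceQ]
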